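/- For natural numbers n_1,...,n_k, the arithmetic functions e_{n_1},...,e_{n_k} (indicator functions of singletons) are algebraically independent over ℂ in the Dirichlet convolution ring if and only if n_1,...,n_k are multiplicatively independent. -/

import Mathlib

open ArithmeticFunction
open scoped Classical

/-- The embedding of `ℂ` into the Dirichlet ring of arithmetic functions,
sending `c` to the function with value `c` at `1` and `0` elsewhere. -/
noncomputable def CC : ℂ →+* ArithmeticFunction ℂ where
  toFun c := ⟨fun n => if n = 1 then c else 0, by simp⟩
  map_zero' := by ext n; simp
  map_one' := by ext n; simp [ArithmeticFunction.one_apply]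
  map_add' a b := by ext n; erw [ArithmeticFunction.add_apply]; by_cases h : n = 1 <;> simp [h]
  map_mul' a b := by
    ext n
    erw [mul_apply]
    by_cases h : n = 1
    · subst h
      rw [show Nat.divisorsAntidiagonal 1 = {(1,1)} from rfl]
      simp
    · rw [Finset.sum_eq_zero]
      · simp [h]
      · rintro ⟨d, e⟩ hde
        rw [Nat.mem_divisorsAntidiagonal] at hde
        rcases Decidable.eq_or_ne d 1 with hd | hd
        · have : e ≠ 1 := by rintro rfl; exact h (by simp [← hde.1, hd])
          simp [this]
        · simp [hd]

/-- The order `v f` of an arithmetic function: the least element of the support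
(`sInf` of the empty set is `0` for `f = 0`; that case is always excluded by hypotheses). -/
noncomputable def ordN (f : ArithmeticFunction ℂ) : ℕ := sInf {n : ℕ | f n ≠ 0}

/-- The order as an extended natural number, `⊤` for `f = 0`. -/
noncomputable def ordE (f : ArithmeticFunction ℂ) : ℕ∞ :=
  sInf ((fun n : ℕ => (n : ℕ∞)) '' {n : ℕ | f n ≠ 0})

/-- The norm `‖f‖ = 1/v(f)`, with `1/∞ = 0`. -/
noncomputable def nrm (f : ArithmeticFunction ℂ) : ℝ :=
  if f = 0 then 0 else 1 / (ordN f : ℝ)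

/-- Extension of an arithmetic function to `ℝ`, vanishing off `ℕ`. -/
noncomputable def extR (f : ArithmeticFunction ℂ) (x : ℝ) : ℂ :=
  if h : ∃ n : ℕ, (n : ℝ) = x then f h.choose else 0

/-- The exponential map `Exp f = exp(f 1) * ∑ (f - f 1)^k / k!` of the Dirichlet ring.
Since `(f - f 1)^k` has order `≥ 2^k`, the value of the infinite series at `n` equals the
value of the partial sum up to `k = n`. -/
noncomputable def ExpA (f : ArithmeticFunction ℂ) : ArithmeticFunction ℂ :=
  ⟨fun n => Complex.exp (f 1) *
      ((∑ k ∈ Finset.range (n + 1),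
        CC ((Nat.factorial k : ℂ)⁻¹) * (f - CC (f 1)) ^ k) n), by simp⟩

/-- The `p`-basic derivation `(∂_p f) n = v_p (n p) • f (n p)`. -/
noncomputable def DP (p : ℕ) (f : ArithmeticFunction ℂ) : ArithmeticFunction ℂ :=
  ⟨fun n => (padicValNat p (n * p) : ℂ) * f (n * p), by simp⟩

/-- The log-derivation `(∂_L f) n = log n * f n`. -/
noncomputable def DL (f : ArithmeticFunction ℂ) : ArithmeticFunction ℂ :=
  ⟨fun n => (Real.log n : ℂ) * f n, by simp⟩

/-- The pointwise multiplication operator `𝔪_g`. -/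
noncomputable def MG (g f : ArithmeticFunction ℂ) : ArithmeticFunction ℂ :=
  ⟨fun n => g n * f n, by simp⟩

/-- Integer powers `𝔪_g^i` of the pointwise multiplication operator:
`(𝔪_g^i f) n = (g n)^i * f n`. -/
noncomputable def MGi (g : ArithmeticFunction ℂ) (i : ℤ) (f : ArithmeticFunction ℂ) :
    ArithmeticFunction ℂ := ⟨fun n => g n ^ i * f n, by simp⟩

/-- `D` is a (ℂ-linear) derivation of the ring of arithmetic functions
under Dirichlet convolution. -/
def IsDerivationA (D : ArithmeticFunction ℂ → ArithmeticFunction ℂ) : Prop :=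
  (∀ f g, D (f + g) = D f + D g) ∧
  (∀ (c : ℂ) (f), D (CC c * f) = CC c * D f) ∧
  (∀ f g, D (f * g) = D f * g + f * D g)

/-- Convergence of a sequence of arithmetic functions in the norm topology. -/
def TendstoA (s : ℕ → ArithmeticFunction ℂ) (l : ArithmeticFunction ℂ) : Prop :=
  Filter.Tendsto (fun m => nrm (s m - l)) Filter.atTop (nhds 0)

/-- (Sequential) continuity of a map in the norm topology, which for this
ultrametric is equivalent to continuity. -/
def ContinuousA (D : ArithmeticFunction ℂ → ArithmeticFunction ℂ) : Prop :=
  ∀ (s : ℕ → ArithmeticFunction ℂ) (l), TendstoA s l → TendstoA (fun m => D (s m)) (D l)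

/-- The indicator function `e_m` of the singleton `{m}`. -/
noncomputable def En (m : ℕ) : ArithmeticFunction ℂ :=
  ⟨fun n => if 0 < n ∧ n = m then 1 else 0, by simp⟩

/-- The constant one arithmetic function `𝟙`. -/
noncomputable def OneA : ArithmeticFunction ℂ := ⟨fun n => if n = 0 then 0 else 1, by simp⟩

/-- The ℂ-algebra structure of the ring of arithmetic functions, via `CC`. -/
noncomputable instance : Algebra ℂ (ArithmeticFunction ℂ) := CC.toAlgebra

lemma En_apply (m q : ℕ) : En m q = if 0 < q ∧ q = m then 1 else 0 := rfl

lemma En_one : En 1 = 1 := by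
  ext q
  by_cases h : q = 1 <;> simp [En_apply, ArithmeticFunction.one_apply, h]

lemma CC_apply (c : ℂ) (d : ℕ) : CC c d = if d = 1 then c else 0 := rfl

lemma En_mul (a b : ℕ) (ha : 0 < a) (hb : 0 < b) : En a * En b = En (a * b) := by
  ext q
  rw [mul_apply]
  by_cases hq : q = a * b
  · subst hq
    rw [Finset.sum_eq_single_of_mem (a, b)]
    · simp [En_apply, ha, hb, Nat.mul_pos ha hb]
    · rw [Nat.mem_divisorsAntidiagonal]
      exact ⟨rfl, by positivity⟩
    · rintro ⟨d, e⟩ hde hne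
      rw [Nat.mem_divisorsAntidiagonal] at hde
      rcases Decidable.eq_or_ne d a with hd | hd
      · subst hd
        have : e = b := by
          have := hde.1
          exact Nat.eq_of_mul_eq_mul_left ha (by linarith [this])
        exact absurd (by rw [this]) hne
      · simp [En_apply, hd]
  · rw [Finset.sum_eq_zero, En_apply, if_neg (by tauto)]
    rintro ⟨d, e⟩ hde
    rw [Nat.mem_divisorsAntidiagonal] at hde
    rcases Decidable.eq_or_ne d a with hd | hd
    · have : e ≠ b := by rintro rfl; exact hq (by rw [← hde.1, hd])
      simp [En_apply, this]
    · simp [En_apply, hd]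

lemma En_pow (a : ℕ) (ha : 0 < a) (m : ℕ) : En a ^ m = En (a ^ m) := by
  induction m with
  | zero => simp [En_one]
  | succ m ih =>
      rw [pow_succ, ih, En_mul _ _ (by positivity) ha, pow_succ]

lemma En_prod {ι : Type*} (s : Finset ι) (f : ι → ℕ) (hf : ∀ i ∈ s, 0 < f i) :
    (∏ i ∈ s, En (f i)) = En (∏ i ∈ s, f i) := by
  induction s using Finset.induction with
  | empty => simp [En_one]
  | @insert a s ha ih =>
      rw [Finset.prod_insert ha, Finset.prod_insert ha,
        ih (fun i hi => hf i (Finset.mem_insert_of_mem hi)),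
        En_mul _ _ (hf a (Finset.mem_insert_self a s))
          (Finset.prod_pos fun i hi => hf i (Finset.mem_insert_of_mem hi))]

lemma sumA_apply {ι : Type*} (s : Finset ι) (F : ι → ArithmeticFunction ℂ) (q : ℕ) :
    (∑ i ∈ s, F i) q = ∑ i ∈ s, F i q := by
  induction s using Finset.induction with
  | empty => simp
  | @insert a s ha ih => rw [Finset.sum_insert ha, Finset.sum_insert ha, ArithmeticFunction.add_apply, ih]

lemma CC_mul_apply (c : ℂ) (f : ArithmeticFunction ℂ) (q : ℕ) :
    (CC c * f) q = c * f q := by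
  rcases Nat.eq_zero_or_pos q with rfl | hq
  · simp
  rw [mul_apply, Finset.sum_eq_single_of_mem (1, q)]
  · simp [CC_apply]
  · rw [Nat.mem_divisorsAntidiagonal]; exact ⟨one_mul q, hq.ne'⟩
  · rintro ⟨d, e⟩ hde hne
    rw [Nat.mem_divisorsAntidiagonal] at hde
    rcases Decidable.eq_or_ne d 1 with hd | hd
    · subst hd
      have he : e = q := by simpa using hde.1
      exact absurd (by rw [he]) hne
    · simp [CC_apply, hd]

/-- The indicator functions `e_{n 1}, …, e_{n k}` are algebraically independent over `ℂ`
in the Dirichlet ring if and only if `n 1, …, n k` are multiplicatively independent. -/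
theorem stmt15 (k : ℕ) (n : Fin k → ℕ) (hn : ∀ i, 0 < n i) :
    AlgebraicIndependent ℂ (fun i => En (n i)) ↔
      (∀ a : Fin k → ℤ, (∏ i, (n i : ℚ) ^ (a i)) = 1 → ∀ i, a i = 0) := by
  have hnQ : ∀ i, (n i : ℚ) ≠ 0 := fun i => Nat.cast_ne_zero.mpr (hn i).ne'
  have halg : algebraMap ℂ (ArithmeticFunction ℂ) = CC := RingHom.algebraMap_toAlgebra CC
  -- `aeval` at a monomial exponent
  have haev : ∀ (p : MvPolynomial (Fin k) ℂ),
      MvPolynomial.aeval (fun i => En (n i)) p =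
        ∑ d ∈ p.support, CC (p.coeff d) * En (∏ i, n i ^ d i) := by
    intro p
    rw [MvPolynomial.aeval_def, MvPolynomial.eval₂_eq' (algebraMap ℂ (ArithmeticFunction ℂ))]
    refine Finset.sum_congr rfl fun d _ => ?_
    rw [halg]
    congr 1
    calc (∏ i, En (n i) ^ d i) = ∏ i, En (n i ^ d i) := by
          refine Finset.prod_congr rfl fun i _ => En_pow _ (hn i) _
      _ = En (∏ i, n i ^ d i) :=
          En_prod _ _ (fun i _ => pow_pos (hn i) _)
  constructor
  · -- algebraic independence → multiplicative independence
    intro hind a ha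
    by_contra hcon
    push_neg at hcon
    obtain ⟨i0, hi0⟩ := hcon
    set dp : Fin k →₀ ℕ := Finsupp.equivFunOnFinite.symm (fun i => (a i).toNat) with hdp
    set dm : Fin k →₀ ℕ := Finsupp.equivFunOnFinite.symm (fun i => (-(a i)).toNat) with hdm
    have hdpapp : ∀ i, dp i = (a i).toNat := fun i => rfl
    have hdmapp : ∀ i, dm i = (-(a i)).toNat := fun i => rfl
    have hne : dp ≠ dm := by
      intro h
      have := congrArg (fun f => f i0) h
      simp only [hdpapp, hdmapp] at this
      omega
    have hNN : (∏ i, n i ^ dp i) = ∏ i, n i ^ dm i := by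
      have hQ : ∀ i, ((a i).toNat : ℤ) = a i + ((-(a i)).toNat : ℤ) := fun i => by omega
      have : (∏ i, (n i : ℚ) ^ ((a i).toNat)) = ∏ i, (n i : ℚ) ^ ((-(a i)).toNat) := by
        calc (∏ i, (n i : ℚ) ^ ((a i).toNat))
            = ∏ i, (n i : ℚ) ^ (((a i).toNat : ℤ)) := by
              refine Finset.prod_congr rfl fun i _ => (zpow_natCast _ _).symm
          _ = ∏ i, (n i : ℚ) ^ (a i) * (n i : ℚ) ^ ((((-(a i)).toNat : ℤ))) := by
              refine Finset.prod_congr rfl fun i _ => ?_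
              rw [hQ i, zpow_add₀ (hnQ i)]
          _ = (∏ i, (n i : ℚ) ^ (a i)) * ∏ i, (n i : ℚ) ^ ((((-(a i)).toNat : ℤ))) :=
              Finset.prod_mul_distrib
          _ = ∏ i, (n i : ℚ) ^ ((-(a i)).toNat) := by
              rw [ha, one_mul]
              refine Finset.prod_congr rfl fun i _ => zpow_natCast _ _
      have hcast : ((∏ i, n i ^ dp i : ℕ) : ℚ) = ((∏ i, n i ^ dm i : ℕ) : ℚ) := by
        push_cast
        simpa [hdpapp, hdmapp] using this
      exact_mod_cast hcast
    -- the polynomial X^dp - X^dm is a nonzero annihilating polynomial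
    set p : MvPolynomial (Fin k) ℂ :=
      MvPolynomial.monomial dp 1 - MvPolynomial.monomial dm 1 with hp
    have hpz : MvPolynomial.aeval (fun i => En (n i)) p = 0 := by
      rw [hp, map_sub]
      have hm : ∀ d : Fin k →₀ ℕ,
          MvPolynomial.aeval (fun i => En (n i)) (MvPolynomial.monomial d (1 : ℂ)) =
            En (∏ i, n i ^ d i) := by
        intro d
        rw [MvPolynomial.aeval_monomial, halg, map_one, one_mul]
        rw [Finsupp.prod_fintype _ _ (fun i => pow_zero _)]
        calc (∏ i, En (n i) ^ d i) = ∏ i, En (n i ^ d i) := by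
              refine Finset.prod_congr rfl fun i _ => En_pow _ (hn i) _
          _ = En (∏ i, n i ^ d i) := En_prod _ _ (fun i _ => pow_pos (hn i) _)
      rw [hm, hm, hNN, sub_self]
    have hp0 : p = 0 := by
      have := hind
      rw [algebraicIndependent_iff] at this
      exact this p hpz
    have : p.coeff dp = 1 := by
      rw [hp, MvPolynomial.coeff_sub, MvPolynomial.coeff_monomial,
        MvPolynomial.coeff_monomial, if_pos rfl, if_neg (by exact fun h => hne h.symm)]
      ring
    rw [hp0] at this
    simp at this
  · -- multiplicative independence → algebraic independence
    intro hmul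
    have hNinj : ∀ m m' : Fin k → ℕ, (∏ i, n i ^ m i) = (∏ i, n i ^ m' i) → m = m' := by
      intro m m' h
      have hQ : (∏ i, (n i : ℚ) ^ ((m i : ℤ) - (m' i : ℤ))) = 1 := by
        calc (∏ i, (n i : ℚ) ^ ((m i : ℤ) - (m' i : ℤ)))
            = ∏ i, (n i : ℚ) ^ (m i : ℤ) / (n i : ℚ) ^ (m' i : ℤ) := by
              refine Finset.prod_congr rfl fun i _ => zpow_sub₀ (hnQ i) _ _
          _ = (∏ i, (n i : ℚ) ^ (m i : ℤ)) / ∏ i, (n i : ℚ) ^ (m' i : ℤ) :=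
              Finset.prod_div_distrib _ _
          _ = 1 := by
              have hc : ((∏ i, n i ^ m i : ℕ) : ℚ) = ((∏ i, n i ^ m' i : ℕ) : ℚ) := by
                exact_mod_cast congrArg (fun x : ℕ => (x : ℚ)) h
              push_cast at hc
              rw [div_eq_one_iff_eq]
              · calc (∏ i, (n i : ℚ) ^ (m i : ℤ)) = ∏ i, (n i : ℚ) ^ (m i) := by
                      refine Finset.prod_congr rfl fun i _ => zpow_natCast _ _
                  _ = ∏ i, (n i : ℚ) ^ (m' i) := hc
                  _ = ∏ i, (n i : ℚ) ^ (m' i : ℤ) := by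
                      refine Finset.prod_congr rfl fun i _ => (zpow_natCast _ _).symm
              · exact Finset.prod_ne_zero_iff.mpr fun i _ => zpow_ne_zero _ (hnQ i)
      have := hmul _ hQ
      funext i
      have := this i
      omega
    rw [algebraicIndependent_iff]
    intro p hp
    rw [haev] at hp
    ext d0
    rw [MvPolynomial.coeff_zero]
    by_cases hd0 : d0 ∈ p.support
    · have hap := congrArg (fun f : ArithmeticFunction ℂ => f (∏ i, n i ^ d0 i)) hp
      simp only [ArithmeticFunction.zero_apply] at hap
      rw [sumA_apply] at hap
      have hpos : 0 < ∏ i, n i ^ d0 i := Finset.prod_pos fun i _ => pow_pos (hn i) _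
      rw [Finset.sum_eq_single_of_mem d0 hd0] at hap
      · rw [CC_mul_apply, En_apply, if_pos ⟨hpos, rfl⟩, mul_one] at hap
        exact hap
      · intro d hd hne
        rw [CC_mul_apply, En_apply, if_neg, mul_zero]
        rintro ⟨-, hEq⟩
        exact hne (DFunLike.ext _ _ (fun i => congrFun (hNinj d0 d hEq) i)).symm
    · exact MvPolynomial.notMem_support_iff.mp hd0
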